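/- On the Lie algebra A_{6,71}^{-3/2} with structure equations ((3/2)e^{16}+e^{25}, (1/2)e^{26}+e^{35}, -(1/2)e^{36}+e^{45}, -(3/2)e^{46}, e^{56}, 0), the pair F = e^{41} + e^{23} + 2e^{56} and ρ = -e^{245} + 2e^{346} - 2e^{126} - e^{135} satisfies dF = 0, dρ = 0, F^3 ≠ 0, and F∧ρ = 0. -/

import Mathlib

open ExteriorAlgebra

set_option maxRecDepth 4000

noncomputable section

/-- The exterior algebra Λ*(g*) of a 6-dimensional real Lie algebra g,
    identified with the exterior algebra on ℝ^6. -/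
abbrev E6 : Type := ExteriorAlgebra ℝ (Fin 6 → ℝ)

/-- The basis 1-forms e^1, ..., e^6 (0-indexed). -/
def e (i : Fin 6) : E6 := ι ℝ (Pi.single i 1)

/-- Structure equations: d of the basis 1-forms. -/
def d1 : Fin 6 → E6 :=
  ![((3:ℝ)/2) • (e 0 * e 5) + e 1 * e 4,
    ((1:ℝ)/2) • (e 1 * e 5) + e 2 * e 4,
    ((-1:ℝ)/2) • (e 2 * e 5) + e 3 * e 4,
    ((-3:ℝ)/2) • (e 3 * e 5),
    e 4 * e 5,
    0]

/-- Leibniz: d(e^i ∧ e^j) = de^i ∧ e^j - e^i ∧ de^j. -/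
def d2 (i j : Fin 6) : E6 := d1 i * e j - e i * d1 j

/-- Leibniz: d(e^i ∧ e^j ∧ e^k) = de^i ∧ e^j ∧ e^k - e^i ∧ de^j ∧ e^k + e^i ∧ e^j ∧ de^k. -/
def d3 (i j k : Fin 6) : E6 := d1 i * e j * e k - e i * d1 j * e k + e i * e j * d1 k

/-- F. -/
def F : E6 := e 3 * e 0 + e 1 * e 2 + (2:ℝ) • (e 4 * e 5)

/-- dF via the Leibniz rule. -/
def dF : E6 := d2 3 0 + d2 1 2 + (2:ℝ) • (d2 4 5)

/-- ρ. -/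
def ρ : E6 := -e 1 * e 3 * e 4 + (2:ℝ) • (e 2 * e 3 * e 5) + (-2:ℝ) • (e 0 * e 1 * e 5) - e 0 * e 2 * e 4

/-- dρ via the Leibniz rule. -/
def dρ : E6 := -d3 1 3 4 + (2:ℝ) • (d3 2 3 5) + (-2:ℝ) • (d3 0 1 5) - d3 0 2 4

lemma e_swap {i j : Fin 6} (_h : j < i) : e i * e j = -(e j * e i) :=
  eq_neg_of_add_eq_zero_left (ι_add_mul_swap _ _)

lemma e_swap' {i j : Fin 6} (x : E6) (h : j < i) :
    e i * (e j * x) = -(e j * (e i * x)) := by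
  rw [← mul_assoc, e_swap h, ← mul_assoc, neg_mul]

lemma e_sq (i : Fin 6) : e i * e i = 0 := ι_sq_zero _

lemma e_sq' (i : Fin 6) (x : E6) : e i * (e i * x) = 0 := by
  rw [← mul_assoc, e_sq, zero_mul]

lemma d1_0 : d1 0 = ((3:ℝ)/2) • (e 0 * e 5) + e 1 * e 4 := rfl
lemma d1_1 : d1 1 = ((1:ℝ)/2) • (e 1 * e 5) + e 2 * e 4 := rfl
lemma d1_2 : d1 2 = ((-1:ℝ)/2) • (e 2 * e 5) + e 3 * e 4 := rfl
lemma d1_3 : d1 3 = ((-3:ℝ)/2) • (e 3 * e 5) := rfl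
lemma d1_4 : d1 4 = e 4 * e 5 := rfl
lemma d1_5 : d1 5 = 0 := rfl

/-- An indexed family of alternating forms that picks out the degree-6 determinant. -/
def detAlt : ∀ i : ℕ, (Fin 6 → ℝ) [⋀^Fin i]→ₗ[ℝ] ℝ
  | 6 => (Pi.basisFun ℝ (Fin 6)).det
  | _ => 0

lemma top_ne_zero : e 0 * (e 1 * (e 2 * (e 3 * (e 4 * e 5)))) ≠ 0 := by
  intro h
  have h2 : ιMulti ℝ 6 (fun i : Fin 6 => (Pi.single i 1 : Fin 6 → ℝ)) = 0 := by
    rw [ιMulti_apply]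
    simpa [e, List.ofFn_succ, mul_assoc] using h
  have h3 := congrArg (liftAlternating detAlt) h2
  rw [liftAlternating_apply_ιMulti, map_zero] at h3
  have hb : (fun i : Fin 6 => (Pi.single i 1 : Fin 6 → ℝ)) = ⇑(Pi.basisFun ℝ (Fin 6)) := by
    funext i; simp
  have h4 : detAlt 6 (fun i : Fin 6 => (Pi.single i 1 : Fin 6 → ℝ)) = 1 := by
    rw [show detAlt 6 = (Pi.basisFun ℝ (Fin 6)).det from rfl, hb, Module.Basis.det_self]
  rw [h4] at h3
  exact one_ne_zero h3

lemma hdF : dF = 0 := by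
  simp (config := { decide := true }) only [dF, d2, d1_0, d1_1, d1_2, d1_3, d1_4, d1_5,
    mul_add, add_mul, smul_mul_assoc, mul_smul_comm, mul_assoc, e_swap, e_swap', e_sq, e_sq',
    smul_neg, neg_mul, mul_neg, neg_neg, mul_zero, zero_mul, smul_zero, sub_eq_add_neg, neg_add_rev,
    zero_add, add_zero, neg_zero, smul_smul]
  module

lemma hdρ : dρ = 0 := by
  simp (config := { decide := true }) only [dρ, d3, d1_0, d1_1, d1_2, d1_3, d1_4, d1_5,
    mul_add, add_mul, smul_mul_assoc, mul_smul_comm, mul_assoc, e_swap, e_swap', e_sq, e_sq',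
    smul_neg, neg_mul, mul_neg, neg_neg, mul_zero, zero_mul, smul_zero, sub_eq_add_neg, neg_add_rev,
    zero_add, add_zero, neg_zero, smul_smul]
  module

lemma hFρ : F * ρ = 0 := by
  simp (config := { decide := true }) only [F, ρ,
    mul_add, add_mul, smul_mul_assoc, mul_smul_comm, mul_assoc, e_swap, e_swap', e_sq, e_sq',
    smul_neg, neg_mul, mul_neg, neg_neg, mul_zero, zero_mul, smul_zero, sub_eq_add_neg, neg_add_rev,
    zero_add, add_zero, neg_zero, smul_smul]

lemma hF3 : F * F * F = (-12:ℝ) • (e 0 * (e 1 * (e 2 * (e 3 * (e 4 * e 5))))) := by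
  simp (config := { decide := true }) only [F,
    mul_add, add_mul, smul_mul_assoc, mul_smul_comm, mul_assoc, e_swap, e_swap', e_sq, e_sq',
    smul_neg, neg_mul, mul_neg, neg_neg, mul_zero, zero_mul, smul_zero, sub_eq_add_neg, neg_add_rev,
    zero_add, add_zero, neg_zero, smul_smul]
  module

/-- Symplectic half-flat structure on A_{6,71}^{-3/2}. -/
theorem stmt13 : dF = 0 ∧ dρ = 0 ∧ F * F * F ≠ 0 ∧ F * ρ = 0 := by
  refine ⟨hdF, hdρ, ?_, hFρ⟩
  rw [hF3]
  intro h
  rcases smul_eq_zero.mp h with h | h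
  · norm_num at h
  · exact top_ne_zero h
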